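/- For all real numbers α₁, α₂, β, the curve germ t ↦ (t³ + α₁t⁴ + α₂t⁷, t⁵ + βt⁷, 0) in ℝ³ is RL-equivalent to the curve germ t ↦ (t³, t⁵, 0). (This is the conclusion of Case 2 of the classification of the class RVV, combined with the appendix equivalences (t³, t⁵ ± t⁷, 0) ∼ (t³, t⁵, 0).) -/

import Mathlib

set_option maxHeartbeats 2000000
set_option maxRecDepth 100000


open Filter

/-- RL-equivalence of analytic curve germs `(ℝ,0) → (ℝⁿ,0)`:
there are an analytic germ `Φ : (ℝⁿ,0) → (ℝⁿ,0)` with invertible differential at `0`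
and an analytic reparametrization `τ : (ℝ,0) → (ℝ,0)` with `τ'(0) ≠ 0`
such that `σ = Φ ∘ γ ∘ τ` near `0`. -/
def RLEquiv {n : ℕ} (γ σ : ℝ → (Fin n → ℝ)) : Prop :=
  ∃ (Φ : (Fin n → ℝ) → (Fin n → ℝ)) (τ : ℝ → ℝ),
    AnalyticAt ℝ Φ 0 ∧ Φ 0 = 0 ∧ Function.Bijective (fderiv ℝ Φ 0) ∧
    AnalyticAt ℝ τ 0 ∧ τ 0 = 0 ∧ deriv τ 0 ≠ 0 ∧
    ∀ᶠ t in nhds (0 : ℝ), σ t = Φ (γ (τ t))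

/-- The order of a function germ at `0`: the smallest `i` such that the `i`-th
Taylor coefficient (equivalently, the `i`-th derivative) at `0` is nonzero. -/
noncomputable def ord (f : ℝ → ℝ) : ℕ := sInf {i : ℕ | iteratedDeriv i f 0 ≠ 0}

/-- The semigroup of a curve germ: all orders `ord (P ∘ γ)` where `P` ranges over
analytic germs `(ℝⁿ,0) → (ℝ,0)` with `P ∘ γ` not identically zero near `0`. -/
def curveSemigroup {n : ℕ} (γ : ℝ → (Fin n → ℝ)) : Set ℕ :=
  {k | ∃ P : (Fin n → ℝ) → ℝ, AnalyticAt ℝ P 0 ∧ P 0 = 0 ∧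
      (¬ ∀ᶠ t in nhds (0 : ℝ), P (γ t) = 0) ∧ ord (fun t => P (γ t)) = k}

/-- The multiplicity of a curve germ: the minimum of the orders of its
not-identically-zero coordinate functions. -/
noncomputable def multC {n : ℕ} (γ : ℝ → (Fin n → ℝ)) : ℕ :=
  sInf {k | ∃ i : Fin n, (¬ ∀ᶠ t in nhds (0 : ℝ), γ t i = 0) ∧ ord (fun t => γ t i) = k}


noncomputable def P1A (e1 e2 c1 c2 c3 x y : ℝ) : ℝ := (4*c2*e1 + 6*c1*c2 + 6*c1^2*e1 + c1^3) * x ^ 1 * y ^ 0 + (4*c3*e1 + 6*c2^2*e1 + 7*c1*e2 + 6*c1*c3 + 3*c1*c2^2 + 12*c1^2*c2*e1 + c1^4*e1) * x ^ 0 * y ^ 1 + (7*c2*e2 + 6*c2*c3 + c2^3 + 12*c1*c3*e1 + 12*c1*c2^2*e1 + 21*c1^2*e2 + 3*c1^2*c3 + 4*c1^3*c2*e1) * x ^ 2 * y ^ 0 + (7*c3*e2 + 3*c3^2 + 21*c2^2*e2 + 3*c2^2*c3 + 24*c1*c2*c3*e1 + 4*c1*c2^3*e1 + 105*c1^2*c2*e2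 + 4*c1^3*c3*e1 + 35*c1^4*e2) * x ^ 1 * y ^ 1 + (6*c3^2*e1 + 12*c2^2*c3*e1 + c2^4*e1 + 42*c1*c3*e2 + 3*c1*c3^2 + 105*c1*c2^2*e2 + 12*c1^2*c2*c3*e1 + 140*c1^3*c2*e2 + 21*c1^5*e2) * x ^ 3 * y ^ 0 + (42*c2*c3*e2 + 3*c2*c3^2 + 35*c2^3*e2 + 12*c1*c3^2*e1 + 12*c1*c2^2*c3*e1 + 105*c1^2*c3*e2 + 210*c1^2*c2^2*e2 + 105*c1^4*c2*e2 + 7*c1^6*e2) * x ^ 0 * y ^ 2 + (12*c2*c3^2*e1 + 4*c2^3*c3*e1 + 210*c1*c2*c3*e2 + 140*c1*c2^3*e2 + 6*c1^2*c3^2*e1 + 140*c1^3*c3*e2 + 210*c1^3*c2^2*e2 + 42*c1^5*c2*e2 + c1^7*e2) * x ^ 2 * y ^ 1 + (21*c3^2*e2 + c3^3 + 105*c2^2*c3*e2 + 35*c2^4*e2 + 12*c1*c2*c3^2*e1 + 420*c1^2*c2*c3*e2 + 210*c1^2*c2^3*e2 + 105*c1^4*c3*e2 + 105*c1^4*c2^2*e2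 + 7*c1^6*c2*e2) * x ^ 4 * y ^ 0 + (4*c3^3*e1 + 6*c2^2*c3^2*e1 + 105*c1*c3^2*e2 + 420*c1*c2^2*c3*e2 + 105*c1*c2^4*e2 + 420*c1^3*c2*c3*e2 + 140*c1^3*c2^3*e2 + 42*c1^5*c3*e2 + 21*c1^5*c2^2*e2) * x ^ 1 * y ^ 2 + (105*c2*c3^2*e2 + 140*c2^3*c3*e2 + 21*c2^5*e2 + 4*c1*c3^3*e1 + 210*c1^2*c3^2*e2 + 630*c1^2*c2^2*c3*e2 + 105*c1^2*c2^4*e2 + 210*c1^4*c2*c3*e2 + 35*c1^4*c2^3*e2 + 7*c1^6*c3*e2) * x ^ 3 * y ^ 1 + (4*c2*c3^3*e1 + 420*c1*c2*c3^2*e2 + 420*c1*c2^3*c3*e2 + 42*c1*c2^5*e2 + 210*c1^3*c3^2*e2 + 420*c1^3*c2^2*c3*e2 + 35*c1^3*c2^4*e2 + 42*c1^5*c2*c3*e2) * x ^ 5 * y ^ 0 + (35*c3^3*e2 + 210*c2^2*c3^2*e2 + 105*c2^4*c3*e2 + 7*c2^6*e2 + 630*c1^2*c2*c3^2*e2 +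 420*c1^2*c2^3*c3*e2 + 21*c1^2*c2^5*e2 + 105*c1^4*c3^2*e2 + 105*c1^4*c2^2*c3*e2) * x ^ 2 * y ^ 2 + (c3^4*e1 + 140*c1*c3^3*e2 + 630*c1*c2^2*c3^2*e2 + 210*c1*c2^4*c3*e2 + 7*c1*c2^6*e2 + 420*c1^3*c2*c3^2*e2 + 140*c1^3*c2^3*c3*e2 + 21*c1^5*c3^2*e2) * x ^ 4 * y ^ 1 + (140*c2*c3^3*e2 + 210*c2^3*c3^2*e2 + 42*c2^5*c3*e2 + c2^7*e2 + 210*c1^2*c3^3*e2 + 630*c1^2*c2^2*c3^2*e2 + 105*c1^2*c2^4*c3*e2 + 105*c1^4*c2*c3^2*e2) * x ^ 6 * y ^ 0 + (420*c1*c2*c3^3*e2 + 420*c1*c2^3*c3^2*e2 + 42*c1*c2^5*c3*e2 + 140*c1^3*c3^3*e2 + 210*c1^3*c2^2*c3^2*e2) * x ^ 3 * y ^ 2 + (35*c3^4*e2 + 210*c2^2*c3^3*e2 + 105*c2^4*c3^2*e2 + 7*c2^6*c3*e2 + 420*c1^2*c2*c3^3*e2 + 210*c1^2*c2^3*c3^2*e2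 + 35*c1^4*c3^3*e2) * x ^ 5 * y ^ 1 + (105*c1*c3^4*e2 + 420*c1*c2^2*c3^3*e2 + 105*c1*c2^4*c3^2*e2 + 140*c1^3*c2*c3^3*e2) * x ^ 7 * y ^ 0 + (105*c2*c3^4*e2 + 140*c2^3*c3^3*e2 + 21*c2^5*c3^2*e2 + 105*c1^2*c3^4*e2 + 210*c1^2*c2^2*c3^3*e2) * x ^ 4 * y ^ 2 + (210*c1*c2*c3^4*e2 + 140*c1*c2^3*c3^3*e2 + 35*c1^3*c3^4*e2) * x ^ 6 * y ^ 1 + (21*c3^5*e2 + 105*c2^2*c3^4*e2 + 35*c2^4*c3^3*e2 + 105*c1^2*c2*c3^4*e2) * x ^ 8 * y ^ 0 + (42*c1*c3^5*e2 + 105*c1*c2^2*c3^4*e2) * x ^ 5 * y ^ 2 + (42*c2*c3^5*e2 + 35*c2^3*c3^4*e2 + 21*c1^2*c3^5*e2) * x ^ 7 * y ^ 1 + (42*c1*c2*c3^5*e2) * x ^ 9 * y ^ 0 + (7*c3^6*e2 + 21*c2^2*c3^5*e2) * x ^ 6 * y ^ 2 + (7*c1*c3^6*e2) * x ^ 8 *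 y ^ 1 + (7*c2*c3^6*e2) * x ^ 10 * y ^ 0 + (c3^7*e2) * x ^ 9 * y ^ 1
noncomputable def P1B (e1 e2 c1 c2 c3 x y : ℝ) : ℝ := (12*c2*c3*e1 + 4*c2^3*e1 + 42*c1*c2*e2 + 6*c1*c2*c3 + 12*c1^2*c3*e1 + 6*c1^2*c2^2*e1 + 35*c1^3*e2) * x ^ 0 * y ^ 1
noncomputable def P2A (e3 c1 c2 c3 x y : ℝ) : ℝ := (5*c1) * x ^ 1 * y ^ 0 + (7*c1*e3 + 20*c1*c2 + 10*c1^3) * x ^ 0 * y ^ 1 + (5*c3 + 7*c2*e3 + 10*c2^2 + 21*c1^2*e3 + 30*c1^2*c2 + 5*c1^4) * x ^ 2 * y ^ 0 + (7*c3*e3 + 20*c2*c3 + 21*c2^2*e3 + 10*c2^3 + 30*c1^2*c3 + 105*c1^2*c2*e3 + 30*c1^2*c2^2 + 35*c1^4*e3 + 5*c1^4*c2) * x ^ 1 * y ^ 1 + (42*c1*c3*e3 + 60*c1*c2*c3 + 105*c1*c2^2*e3 + 20*c1*c2^3 + 20*c1^3*c3 + 140*c1^3*c2*e3 + 10*c1^3*c2^2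 + 21*c1^5*e3) * x ^ 3 * y ^ 0 + (10*c3^2 + 42*c2*c3*e3 + 30*c2^2*c3 + 35*c2^3*e3 + 5*c2^4 + 105*c1^2*c3*e3 + 60*c1^2*c2*c3 + 210*c1^2*c2^2*e3 + 10*c1^2*c2^3 + 5*c1^4*c3 + 105*c1^4*c2*e3 + 7*c1^6*e3) * x ^ 0 * y ^ 2 + (30*c1*c3^2 + 210*c1*c2*c3*e3 + 60*c1*c2^2*c3 + 140*c1*c2^3*e3 + 5*c1*c2^4 + 140*c1^3*c3*e3 + 20*c1^3*c2*c3 + 210*c1^3*c2^2*e3 + 42*c1^5*c2*e3 + c1^7*e3) * x ^ 2 * y ^ 1 + (21*c3^2*e3 + 30*c2*c3^2 + 105*c2^2*c3*e3 + 20*c2^3*c3 + 35*c2^4*e3 + c2^5 + 30*c1^2*c3^2 + 420*c1^2*c2*c3*e3 + 30*c1^2*c2^2*c3 + 210*c1^2*c2^3*e3 + 105*c1^4*c3*e3 + 105*c1^4*c2^2*e3 + 7*c1^6*c2*e3) * x ^ 4 * y ^ 0 + (105*c1*c3^2*e3 + 60*c1*c2*c3^2 + 420*c1*c2^2*c3*e3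 + 20*c1*c2^3*c3 + 105*c1*c2^4*e3 + 10*c1^3*c3^2 + 420*c1^3*c2*c3*e3 + 140*c1^3*c2^3*e3 + 42*c1^5*c3*e3 + 21*c1^5*c2^2*e3) * x ^ 1 * y ^ 2 + (10*c3^3 + 105*c2*c3^2*e3 + 30*c2^2*c3^2 + 140*c2^3*c3*e3 + 5*c2^4*c3 + 21*c2^5*e3 + 210*c1^2*c3^2*e3 + 30*c1^2*c2*c3^2 + 630*c1^2*c2^2*c3*e3 + 105*c1^2*c2^4*e3 + 210*c1^4*c2*c3*e3 + 35*c1^4*c2^3*e3 + 7*c1^6*c3*e3) * x ^ 3 * y ^ 1 + (20*c1*c3^3 + 420*c1*c2*c3^2*e3 + 30*c1*c2^2*c3^2 + 420*c1*c2^3*c3*e3 + 42*c1*c2^5*e3 + 210*c1^3*c3^2*e3 + 420*c1^3*c2^2*c3*e3 + 35*c1^3*c2^4*e3 + 42*c1^5*c2*c3*e3) * x ^ 5 * y ^ 0 + (35*c3^3*e3 + 20*c2*c3^3 + 210*c2^2*c3^2*e3 + 10*c2^3*c3^2 + 105*c2^4*c3*e3 + 7*c2^6*e3 + 10*c1^2*c3^3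 + 630*c1^2*c2*c3^2*e3 + 420*c1^2*c2^3*c3*e3 + 21*c1^2*c2^5*e3 + 105*c1^4*c3^2*e3 + 105*c1^4*c2^2*c3*e3) * x ^ 2 * y ^ 2 + (140*c1*c3^3*e3 + 20*c1*c2*c3^3 + 630*c1*c2^2*c3^2*e3 + 210*c1*c2^4*c3*e3 + 7*c1*c2^6*e3 + 420*c1^3*c2*c3^2*e3 + 140*c1^3*c2^3*c3*e3 + 21*c1^5*c3^2*e3) * x ^ 4 * y ^ 1 + (5*c3^4 + 140*c2*c3^3*e3 + 10*c2^2*c3^3 + 210*c2^3*c3^2*e3 + 42*c2^5*c3*e3 + c2^7*e3 + 210*c1^2*c3^3*e3 + 630*c1^2*c2^2*c3^2*e3 + 105*c1^2*c2^4*c3*e3 + 105*c1^4*c2*c3^2*e3) * x ^ 6 * y ^ 0 + (5*c1*c3^4 + 420*c1*c2*c3^3*e3 + 420*c1*c2^3*c3^2*e3 + 42*c1*c2^5*c3*e3 + 140*c1^3*c3^3*e3 + 210*c1^3*c2^2*c3^2*e3) * x ^ 3 * y ^ 2 + (35*c3^4*e3 + 5*c2*c3^4 + 210*c2^2*c3^3*e3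 + 105*c2^4*c3^2*e3 + 7*c2^6*c3*e3 + 420*c1^2*c2*c3^3*e3 + 210*c1^2*c2^3*c3^2*e3 + 35*c1^4*c3^3*e3) * x ^ 5 * y ^ 1 + (105*c1*c3^4*e3 + 420*c1*c2^2*c3^3*e3 + 105*c1*c2^4*c3^2*e3 + 140*c1^3*c2*c3^3*e3) * x ^ 7 * y ^ 0 + (c3^5 + 105*c2*c3^4*e3 + 140*c2^3*c3^3*e3 + 21*c2^5*c3^2*e3 + 105*c1^2*c3^4*e3 + 210*c1^2*c2^2*c3^3*e3) * x ^ 4 * y ^ 2 + (210*c1*c2*c3^4*e3 + 140*c1*c2^3*c3^3*e3 + 35*c1^3*c3^4*e3) * x ^ 6 * y ^ 1 + (21*c3^5*e3 + 105*c2^2*c3^4*e3 + 35*c2^4*c3^3*e3 + 105*c1^2*c2*c3^4*e3) * x ^ 8 * y ^ 0 + (42*c1*c3^5*e3 + 105*c1*c2^2*c3^4*e3) * x ^ 5 * y ^ 2 + (42*c2*c3^5*e3 + 35*c2^3*c3^4*e3 + 21*c1^2*c3^5*e3) * x ^ 7 * y ^ 1 + (42*c1*c2*c3^5*e3) * x ^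 9 * y ^ 0 + (7*c3^6*e3 + 21*c2^2*c3^5*e3) * x ^ 6 * y ^ 2 + (7*c1*c3^6*e3) * x ^ 8 * y ^ 1 + (7*c2*c3^6*e3) * x ^ 10 * y ^ 0 + (c3^7*e3) * x ^ 9 * y ^ 1
noncomputable def P2B (e3 c1 c2 c3 x y : ℝ) : ℝ := (20*c1*c3 + 42*c1*c2*e3 + 30*c1*c2^2 + 35*c1^3*e3 + 20*c1^3*c2 + c1^5) * x ^ 0 * y ^ 1
noncomputable def C1c (e1 c1 c2 : ℝ) : ℝ := 3*c2 + 4*c1*e1 + 3*c1^2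
noncomputable def Q1 (e1 e2 c1 c2 c3 x y : ℝ) : ℝ :=
  (x + C1c e1 c1 c2 * y) + (x * P1A e1 e2 c1 c2 c3 x y + y * P1B e1 e2 c1 c2 c3 x y)
noncomputable def Q2 (e3 c1 c2 c3 x y : ℝ) : ℝ :=
  y + (x * P2A e3 c1 c2 c3 x y + y * P2B e3 c1 c2 c3 x y)

theorem key1 (e1 e2 c1 c2 c3 t : ℝ)
    (h4 : e1 + 3*c1 = 0)
    (h7 : e2 + 3*c3 + 3*c2^2 + 12*c1*c2*e1 + 3*c1^2*c2 + 4*c1^3*e1 = 0) :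
    Q1 e1 e2 c1 c2 c3 (t ^ 3) (t ^ 5)
      = (t + c1 * t ^ 2 + c2 * t ^ 3 + c3 * t ^ 5) ^ 3 + e1 * (t + c1 * t ^ 2 + c2 * t ^ 3 + c3 * t ^ 5) ^ 4 + e2 * (t + c1 * t ^ 2 + c2 * t ^ 3 + c3 * t ^ 5) ^ 7 := by
  simp only [Q1, C1c, P1A, P1B]
  linear_combination (-(t^4))*h4 + (-(t^7))*h7

theorem key2 (e3 c1 c2 c3 t : ℝ)
    (h7 : e3 + 5*c2 + 10*c1^2 = 0) :
    Q2 e3 c1 c2 c3 (t ^ 3) (t ^ 5)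
      = (t + c1 * t ^ 2 + c2 * t ^ 3 + c3 * t ^ 5) ^ 5 + e3 * (t + c1 * t ^ 2 + c2 * t ^ 3 + c3 * t ^ 5) ^ 7 := by
  simp only [Q2, P2A, P2B]
  linear_combination (-(t^7))*h7

lemma myAdd {E : Type*} [NormedAddCommGroup E] [NormedSpace ℝ E] {f g : E → ℝ} {x : E}
    (hf : AnalyticAt ℝ f x) (hg : AnalyticAt ℝ g x) :
    AnalyticAt ℝ (fun v => f v + g v) x := hf.add hg

lemma hxA : AnalyticAt ℝ (fun v : Fin 3 → ℝ => v 0) 0 :=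
  (ContinuousLinearMap.proj (R := ℝ) (φ := fun _ : Fin 3 => ℝ) 0).analyticAt 0

lemma hyA : AnalyticAt ℝ (fun v : Fin 3 → ℝ => v 1) 0 :=
  (ContinuousLinearMap.proj (R := ℝ) (φ := fun _ : Fin 3 => ℝ) 1).analyticAt 0

lemma hzA : AnalyticAt ℝ (fun v : Fin 3 → ℝ => v 2) 0 :=
  (ContinuousLinearMap.proj (R := ℝ) (φ := fun _ : Fin 3 => ℝ) 2).analyticAt 0

lemma analyticAt_mono (c : ℝ) (a b : ℕ) :
    AnalyticAt ℝ (fun v : Fin 3 → ℝ => c * v 0 ^ a * v 1 ^ b) 0 :=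
  (analyticAt_const.mul (hxA.pow a)).mul (hyA.pow b)

lemma P1A_analytic (e1 e2 c1 c2 c3 : ℝ) :
    AnalyticAt ℝ (fun v : Fin 3 → ℝ => P1A e1 e2 c1 c2 c3 (v 0) (v 1)) 0 := by
  simp only [P1A]
  repeat first
    | exact analyticAt_mono _ _ _
    | apply myAdd

lemma P1B_analytic (e1 e2 c1 c2 c3 : ℝ) :
    AnalyticAt ℝ (fun v : Fin 3 → ℝ => P1B e1 e2 c1 c2 c3 (v 0) (v 1)) 0 := by
  simp only [P1B]
  repeat first
    | exact analyticAt_mono _ _ _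
    | apply myAdd

lemma P2A_analytic (e3 c1 c2 c3 : ℝ) :
    AnalyticAt ℝ (fun v : Fin 3 → ℝ => P2A e3 c1 c2 c3 (v 0) (v 1)) 0 := by
  simp only [P2A]
  repeat first
    | exact analyticAt_mono _ _ _
    | apply myAdd

lemma P2B_analytic (e3 c1 c2 c3 : ℝ) :
    AnalyticAt ℝ (fun v : Fin 3 → ℝ => P2B e3 c1 c2 c3 (v 0) (v 1)) 0 := by
  simp only [P2B]
  repeat first
    | exact analyticAt_mono _ _ _
    | apply myAdd

lemma P1A_zero (e1 e2 c1 c2 c3 : ℝ) : P1A e1 e2 c1 c2 c3 0 0 = 0 := by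
  simp only [P1A]; ring

lemma P1B_zero (e1 e2 c1 c2 c3 : ℝ) : P1B e1 e2 c1 c2 c3 0 0 = 0 := by
  simp only [P1B]; ring

lemma P2A_zero (e3 c1 c2 c3 : ℝ) : P2A e3 c1 c2 c3 0 0 = 0 := by
  simp only [P2A]; ring

lemma P2B_zero (e3 c1 c2 c3 : ℝ) : P2B e3 c1 c2 c3 0 0 = 0 := by
  simp only [P2B]; ring

/-- The polynomial map `Ψ`. -/
noncomputable def Psi (e1 e2 e3 c1 c2 c3 : ℝ) (v : Fin 3 → ℝ) : Fin 3 → ℝ :=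
  ![Q1 e1 e2 c1 c2 c3 (v 0) (v 1), Q2 e3 c1 c2 c3 (v 0) (v 1), v 2]

/-- The quadratic-and-higher part of `Ψ`. -/
noncomputable def Nmap (e1 e2 e3 c1 c2 c3 : ℝ) (v : Fin 3 → ℝ) : Fin 3 → ℝ :=
  ![v 0 * P1A e1 e2 c1 c2 c3 (v 0) (v 1) + v 1 * P1B e1 e2 c1 c2 c3 (v 0) (v 1),
    v 0 * P2A e3 c1 c2 c3 (v 0) (v 1) + v 1 * P2B e3 c1 c2 c3 (v 0) (v 1),
    0]

/-- The linear part of `Ψ`, as a continuous linear equivalence. -/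
noncomputable def Lequiv (c : ℝ) : (Fin 3 → ℝ) ≃L[ℝ] (Fin 3 → ℝ) :=
  LinearEquiv.toContinuousLinearEquiv
  { toFun := fun v => ![v 0 + c * v 1, v 1, v 2]
    map_add' := by
      intro x y; funext i
      fin_cases i <;> simp <;> ring
    map_smul' := by
      intro m x; funext i
      fin_cases i <;> simp <;> ring
    invFun := fun v => ![v 0 - c * v 1, v 1, v 2]
    left_inv := by
      intro v; funext i
      fin_cases i <;> simp
    right_inv := by
      intro v; funext i
      fin_cases i <;> simp }

lemma Lequiv_apply (c : ℝ) (v : Fin 3 → ℝ) :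
    Lequiv c v = ![v 0 + c * v 1, v 1, v 2] := rfl

lemma quad {A B : (Fin 3 → ℝ) → ℝ} (hA : AnalyticAt ℝ A 0) (hB : AnalyticAt ℝ B 0)
    (hA0 : A 0 = 0) (hB0 : B 0 = 0) :
    HasFDerivAt (fun v : Fin 3 → ℝ => v 0 * A v + v 1 * B v)
      (0 : (Fin 3 → ℝ) →L[ℝ] ℝ) 0 := by
  have h0 : HasFDerivAt (fun v : Fin 3 → ℝ => v 0)
      (ContinuousLinearMap.proj (R := ℝ) (φ := fun _ : Fin 3 => ℝ) 0) 0 := by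
    exact
      ContinuousLinearMap.hasFDerivAt
        (f := ContinuousLinearMap.proj (R := ℝ) (φ := fun _ : Fin 3 => ℝ) 0)
        (x := (0 : Fin 3 → ℝ))
  have h1 : HasFDerivAt (fun v : Fin 3 → ℝ => v 1)
      (ContinuousLinearMap.proj (R := ℝ) (φ := fun _ : Fin 3 => ℝ) 1) 0 := by
    exact
      ContinuousLinearMap.hasFDerivAt
        (f := ContinuousLinearMap.proj (R := ℝ) (φ := fun _ : Fin 3 => ℝ) 1)
        (x := (0 : Fin 3 → ℝ))
  have k1 := h0.mul hA.differentiableAt.hasFDerivAt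
  have k2 := h1.mul hB.differentiableAt.hasFDerivAt
  have k := k1.add k2
  simp [hA0, hB0] at k
  exact k

/-- For all `α₁, α₂, β`, the curve `(t³ + α₁t⁴ + α₂t⁷, t⁵ + βt⁷, 0)` is
RL-equivalent to `(t³, t⁵, 0)`. -/
theorem RLEquiv_RVV_case2 (α₁ α₂ β : ℝ) :
    RLEquiv (fun t : ℝ => ![t ^ 3 + α₁ * t ^ 4 + α₂ * t ^ 7, t ^ 5 + β * t ^ 7, 0])
      (fun t : ℝ => ![t ^ 3, t ^ 5, 0]) := by
  obtain ⟨c1, hc1⟩ : ∃ x : ℝ, x = -α₁/3 := ⟨_, rfl⟩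
  obtain ⟨c2, hc2⟩ : ∃ x : ℝ, x = -(β + 10*c1^2)/5 := ⟨_, rfl⟩
  obtain ⟨c3, hc3⟩ : ∃ x : ℝ, x =
      -(α₂ + 3*c2^2 + 12*c1*c2*α₁ + 3*c1^2*c2 + 4*c1^3*α₁)/3 := ⟨_, rfl⟩
  have h4 : α₁ + 3*c1 = 0 := by rw [hc1]; ring
  have h7 : α₂ + 3*c3 + 3*c2^2 + 12*c1*c2*α₁ + 3*c1^2*c2 + 4*c1^3*α₁ = 0 := by
    rw [hc3]; ring
  have h7' : β + 5*c2 + 10*c1^2 = 0 := by rw [hc2]; ring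
  -- analyticity of Ψ
  have hA : AnalyticAt ℝ (Psi α₁ α₂ β c1 c2 c3) 0 := by
    have hp : ∀ i : Fin 3,
        AnalyticAt ℝ
          (![(fun v : Fin 3 → ℝ => Q1 α₁ α₂ c1 c2 c3 (v 0) (v 1)),
             (fun v : Fin 3 → ℝ => Q2 β c1 c2 c3 (v 0) (v 1)),
             (fun v : Fin 3 → ℝ => v 2)] i) 0 := by
      intro i
      fin_cases i
      · simp only [Matrix.cons_val_zero, Q1]
        exact myAdd (myAdd hxA (analyticAt_const.mul hyA))
          (myAdd (hxA.mul (P1A_analytic α₁ α₂ c1 c2 c3))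
            (hyA.mul (P1B_analytic α₁ α₂ c1 c2 c3)))
      · simp only [Matrix.cons_val_one, Matrix.head_cons, Q2]
        exact myAdd hyA
          (myAdd (hxA.mul (P2A_analytic β c1 c2 c3))
            (hyA.mul (P2B_analytic β c1 c2 c3)))
      · simpa using hzA
    have := AnalyticAt.pi hp
    apply this.congr
    apply Filter.Eventually.of_forall
    intro v
    funext i
    fin_cases i <;> simp [Psi]
  -- the derivative of Ψ at 0
  have hFeq : Psi α₁ α₂ β c1 c2 c3
      = fun v => Lequiv (C1c α₁ c1 c2) v + Nmap α₁ α₂ β c1 c2 c3 v := by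
    funext v
    funext i
    fin_cases i <;>
      simp [Psi, Nmap, Lequiv_apply, Q1, Q2, Pi.add_apply]
  have hN : HasFDerivAt (Nmap α₁ α₂ β c1 c2 c3)
      (0 : (Fin 3 → ℝ) →L[ℝ] (Fin 3 → ℝ)) 0 := by
    apply hasFDerivAt_pi'.2
    intro i
    fin_cases i
    · simp only [Nmap, Matrix.cons_val_zero, ContinuousLinearMap.comp_zero]
      exact quad (P1A_analytic α₁ α₂ c1 c2 c3) (P1B_analytic α₁ α₂ c1 c2 c3)
        (by simpa using P1A_zero α₁ α₂ c1 c2 c3)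
        (by simpa using P1B_zero α₁ α₂ c1 c2 c3)
    · simp only [Nmap, Matrix.cons_val_one, Matrix.head_cons,
        ContinuousLinearMap.comp_zero]
      exact quad (P2A_analytic β c1 c2 c3) (P2B_analytic β c1 c2 c3)
        (by simpa using P2A_zero β c1 c2 c3)
        (by simpa using P2B_zero β c1 c2 c3)
    · simp only [Nmap, ContinuousLinearMap.comp_zero]
      exact hasFDerivAt_const 0 0
  have hF : HasFDerivAt (Psi α₁ α₂ β c1 c2 c3)
      (↑(Lequiv (C1c α₁ c1 c2)) : (Fin 3 → ℝ) →L[ℝ] (Fin 3 → ℝ)) 0 := by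
    rw [hFeq]
    simpa using (Lequiv (C1c α₁ c1 c2)).hasFDerivAt.add hN
  have hS : HasStrictFDerivAt (Psi α₁ α₂ β c1 c2 c3)
      (↑(Lequiv (C1c α₁ c1 c2)) : (Fin 3 → ℝ) →L[ℝ] (Fin 3 → ℝ)) 0 := by
    have := hA.hasStrictFDerivAt
    rwa [hF.fderiv] at this
  -- value of Ψ at 0
  have hΨ0 : Psi α₁ α₂ β c1 c2 c3 0 = 0 := by
    funext i
    fin_cases i <;>
      simp [Psi, Q1, Q2, C1c, P1A, P1B, P2A, P2B]
  -- the local inverse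
  set Φ : (Fin 3 → ℝ) → (Fin 3 → ℝ) :=
    hS.localInverse (Psi α₁ α₂ β c1 c2 c3) (Lequiv (C1c α₁ c1 c2)) 0 with hΦdef
  have hΦ0 : Φ 0 = 0 := by
    have := hS.localInverse_apply_image
    rwa [hΨ0] at this
  have hΦana : AnalyticAt ℝ Φ 0 := by
    have h0src := hS.mem_toOpenPartialHomeomorph_source
    have hcoe : ⇑(hS.toOpenPartialHomeomorph (Psi α₁ α₂ β c1 c2 c3))
        = Psi α₁ α₂ β c1 c2 c3 := hS.toOpenPartialHomeomorph_coe
    have hAf : AnalyticAt ℝ (⇑(hS.toOpenPartialHomeomorph (Psi α₁ α₂ β c1 c2 c3))) 0 := by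
      rw [hcoe]; exact hA
    have hfd : fderiv ℝ (⇑(hS.toOpenPartialHomeomorph (Psi α₁ α₂ β c1 c2 c3))) 0
        = ↑(Lequiv (C1c α₁ c1 c2)) := by
      rw [hcoe]; exact hF.fderiv
    have h := (hS.toOpenPartialHomeomorph (Psi α₁ α₂ β c1 c2 c3)).analyticAt_symm'
      h0src hAf hfd
    rw [hcoe, hΨ0] at h
    exact h
  have hΦbij : Function.Bijective (fderiv ℝ Φ 0) := by
    have hstr := hS.to_localInverse
    rw [hΨ0] at hstr
    rw [hstr.hasFDerivAt.fderiv]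
    exact (Lequiv (C1c α₁ c1 c2)).symm.bijective
  -- the reparametrization τ
  have hτana : AnalyticAt ℝ (fun t : ℝ => t + c1 * t ^ 2 + c2 * t ^ 3 + c3 * t ^ 5) 0 := by
    have h1 : AnalyticAt ℝ (fun t : ℝ => t) 0 := analyticAt_id
    exact myAdd (myAdd (myAdd h1 (analyticAt_const.mul (h1.pow 2)))
      (analyticAt_const.mul (h1.pow 3))) (analyticAt_const.mul (h1.pow 5))
  have hτd : HasDerivAt (fun t : ℝ => t + c1 * t ^ 2 + c2 * t ^ 3 + c3 * t ^ 5)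
      (1 + c1 * (2 * (0:ℝ) ^ 1) + c2 * (3 * (0:ℝ) ^ 2) + c3 * (5 * (0:ℝ) ^ 4)) 0 :=
    ((((hasDerivAt_id' (x := (0:ℝ))).add
      ((hasDerivAt_pow 2 (0:ℝ)).const_mul c1)).add
      ((hasDerivAt_pow 3 (0:ℝ)).const_mul c2)).add
      ((hasDerivAt_pow 5 (0:ℝ)).const_mul c3))
  have hτder : deriv (fun t : ℝ => t + c1 * t ^ 2 + c2 * t ^ 3 + c3 * t ^ 5) 0 ≠ 0 := by
    rw [hτd.deriv]; norm_num
  -- the key algebraic identity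
  have hkey : ∀ s : ℝ,
      Psi α₁ α₂ β c1 c2 c3 ![s ^ 3, s ^ 5, 0]
        = ![(s + c1 * s ^ 2 + c2 * s ^ 3 + c3 * s ^ 5) ^ 3
              + α₁ * (s + c1 * s ^ 2 + c2 * s ^ 3 + c3 * s ^ 5) ^ 4
              + α₂ * (s + c1 * s ^ 2 + c2 * s ^ 3 + c3 * s ^ 5) ^ 7,
            (s + c1 * s ^ 2 + c2 * s ^ 3 + c3 * s ^ 5) ^ 5
              + β * (s + c1 * s ^ 2 + c2 * s ^ 3 + c3 * s ^ 5) ^ 7,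
            0] := by
    intro s
    funext i
    fin_cases i
    · simpa [Psi] using key1 α₁ α₂ c1 c2 c3 s h4 h7
    · simpa [Psi] using key2 β c1 c2 c3 s h7'
    · simp [Psi]
  -- conclusion
  refine ⟨Φ, fun t : ℝ => t + c1 * t ^ 2 + c2 * t ^ 3 + c3 * t ^ 5,
    hΦana, hΦ0, hΦbij, hτana, by norm_num, hτder, ?_⟩
  have hev := hS.eventually_left_inverse
  have hσc : ContinuousAt (fun t : ℝ => (![t ^ 3, t ^ 5, 0] : Fin 3 → ℝ)) 0 := by
    apply continuousAt_pi.2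
    intro i
    fin_cases i <;> simp <;> fun_prop
  have h3 : Filter.Tendsto (fun t : ℝ => (![t ^ 3, t ^ 5, 0] : Fin 3 → ℝ))
      (nhds 0) (nhds 0) := by
    have h := hσc.tendsto
    have h0 : (![(0:ℝ) ^ 3, (0:ℝ) ^ 5, (0:ℝ)] : Fin 3 → ℝ) = 0 := by
      funext i; fin_cases i <;> simp
    rwa [h0] at h
  have h2 : ∀ᶠ t in nhds (0:ℝ),
      Φ (Psi α₁ α₂ β c1 c2 c3 ![t ^ 3, t ^ 5, 0]) = ![t ^ 3, t ^ 5, 0] :=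
    h3.eventually hev
  filter_upwards [h2] with t ht
  have hk := hkey t
  rw [← ht, hk]
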